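/- Let m ≥ 2 and let T_f be an invertible linear cellular automaton on (ZMod m)^ℤ with local rule f(x_l,…,x_r) = Σ_{i=l}^{r} λ_i x_i (mod m), so that for each prime factor p of m there is a unique index j_p with p ∤ λ_{j_p}. Then T_f fails to be ergodic with respect to the uniform Bernoulli measure if and only if j_p = 0 for some prime factor p of m. -/

import Mathlib

open MeasureTheory

/-- The linear cellular automaton on `(ZMod m)^ℤ` with local rule
`f(x_l, …, x_r) = Σ_{j=l}^{r} λ_j x_j (mod m)`. -/
noncomputable def cellAuto (m : ℕ) (l r : ℤ) (lam : ℤ → ZMod m) :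
    (ℤ → ZMod m) → (ℤ → ZMod m) :=
  fun x i => ∑ j ∈ Finset.Icc l r, lam j * x (i + j)

/-- `μ` is the uniform Bernoulli measure on `(ZMod d)^ℤ`: the infinite product over `ℤ`
of the uniform probability measure on `ZMod d`, characterized by its values on cylinders. -/
def IsUniformBernoulli (d : ℕ) (μ : Measure (ℤ → ZMod d)) : Prop :=
  IsProbabilityMeasure μ ∧
    ∀ (s : Finset ℤ) (a : ℤ → ZMod d),
      μ {x | ∀ i ∈ s, x i = a i} = ((d : ENNReal))⁻¹ ^ s.card

/-- `T` is ergodic with respect to `μ`: every measurable `T`-invariant set is null or conull. -/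
def IsErgodic {X : Type*} [MeasurableSpace X] (T : X → X) (μ : Measure X) : Prop :=
  ∀ A : Set X, MeasurableSet A → T ⁻¹' A = A → μ A = 0 ∨ μ A = 1

namespace CA
variable {m : ℕ}

def rst (s : Finset ℤ) (x : ℤ → ZMod m) : {i // i ∈ s} → ZMod m := fun i => x i.1

noncomputable def ext (s : Finset ℤ) (a : {i // i ∈ s} → ZMod m) : ℤ → ZMod m :=
  fun i => if h : i ∈ s then a ⟨i, h⟩ else 0

lemma measurableSet_cyl (s : Finset ℤ) (a : ℤ → ZMod m) :
    MeasurableSet {x : ℤ → ZMod m | ∀ i ∈ s, x i = a i} := by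
  have h : {x : ℤ → ZMod m | ∀ i ∈ s, x i = a i}
      = ⋂ i ∈ (s : Set ℤ), (fun x : ℤ → ZMod m => x i) ⁻¹' {a i} := by
    ext x; simp
  rw [h]
  exact MeasurableSet.biInter (s : Set ℤ).to_countable
    fun i _ => (measurable_pi_apply i) (measurableSet_singleton _)

lemma measurableSet_rst (s : Finset ℤ) (E : Finset ({i // i ∈ s} → ZMod m)) :
    MeasurableSet {x : ℤ → ZMod m | rst s x ∈ E} := by
  classical
  have h : {x : ℤ → ZMod m | rst s x ∈ E}
      = ⋃ a ∈ E, {x : ℤ → ZMod m | ∀ i ∈ s, x i = ext s a i} := by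
    ext x
    simp only [Set.mem_setOf_eq, Set.mem_iUnion]
    constructor
    · intro h; exact ⟨rst s x, h, fun i hi => by simp [ext, hi, rst]⟩
    · rintro ⟨a, ha, h⟩
      have : rst s x = a := funext fun i => by
        have := h i.1 i.2; simpa [ext, i.2, rst] using this
      rwa [this]
  rw [h]
  exact MeasurableSet.biUnion E.countable_toSet fun a _ => measurableSet_cyl _ _

lemma meas_restrict {μ : Measure (ℤ → ZMod m)} (hμ : IsUniformBernoulli m μ)
    (s : Finset ℤ) (E : Finset ({i // i ∈ s} → ZMod m)) :
    μ {x | rst s x ∈ E} = E.card * ((m : ENNReal))⁻¹ ^ s.card := by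
  classical
  have hset : {x : ℤ → ZMod m | rst s x ∈ E}
      = ⋃ a ∈ E, {x : ℤ → ZMod m | ∀ i ∈ s, x i = ext s a i} := by
    ext x
    simp only [Set.mem_setOf_eq, Set.mem_iUnion]
    constructor
    · intro h; exact ⟨rst s x, h, fun i hi => by simp [ext, hi, rst]⟩
    · rintro ⟨a, ha, h⟩
      have : rst s x = a := funext fun i => by
        have := h i.1 i.2; simpa [ext, i.2, rst] using this
      rwa [this]
  rw [hset, measure_biUnion_finset ?hd (fun a _ => measurableSet_cyl _ _)]
  · rw [Finset.sum_congr rfl fun a _ => hμ.2 s (ext s a)]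
    simp [Finset.sum_const, mul_comm]
  · intro a ha b hb hne
    apply Set.disjoint_left.2
    intro x hxa hxb
    apply hne
    funext i
    have h1 := hxa i.1 i.2
    have h2 := hxb i.1 i.2
    simp only [ext, i.2, dif_pos] at h1 h2
    rw [← h1, ← h2]


lemma card_fiber {G H : Type*} [AddCommGroup G] [AddCommGroup H] [Fintype G] [Fintype H]
    [DecidableEq H] (φ : G →+ H) (hs : Function.Surjective φ) (y : H) :
    (Finset.univ.filter (fun g => φ g = y)).card * Fintype.card H = Fintype.card G := by
  classical
  obtain ⟨x₀, hx₀⟩ := hs y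
  have e1 : {g // φ g = y} ≃ φ.ker := by
    refine ⟨fun g => ⟨g.1 - x₀, by simp [AddMonoidHom.mem_ker, map_sub, g.2, hx₀]⟩,
      fun k => ⟨k.1 + x₀, ?_⟩, fun g => by simp, fun k => by simp⟩
    have hk : φ k.1 = 0 := k.2
    simp [map_add, hk, hx₀]
  have e2 : (G ⧸ φ.ker) ≃+ H := QuotientAddGroup.quotientKerEquivOfSurjective φ hs
  have h1 : Nat.card G = Nat.card (G ⧸ φ.ker) * Nat.card φ.ker :=
    AddSubgroup.card_eq_card_quotient_mul_card_addSubgroup φ.ker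
  have h2 : Nat.card (G ⧸ φ.ker) = Nat.card H := Nat.card_congr e2.toEquiv
  have h3 : (Finset.univ.filter (fun g => φ g = y)).card = Nat.card φ.ker := by
    rw [← Nat.card_congr e1, Nat.card_eq_fintype_card, Fintype.card_subtype]
  rw [h3, ← Nat.card_eq_fintype_card, ← Nat.card_eq_fintype_card, h1, h2, mul_comm]

lemma cast_eq_zero_iff' (hm : 2 ≤ m) {p : ℕ} (hpm : p ∣ m) (a : ZMod m) :
    ZMod.castHom hpm (ZMod p) a = 0 ↔ p ∣ a.val := by
  haveI : NeZero m := ⟨by omega⟩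
  rw [ZMod.castHom_apply, ← ZMod.natCast_val, ZMod.natCast_eq_zero_iff]

lemma exists_mul_of_cast_zero (hm : 2 ≤ m) {p : ℕ} (hpm : p ∣ m) (a : ZMod m)
    (h : ZMod.castHom hpm (ZMod p) a = 0) : ∃ c : ZMod m, a = (p : ZMod m) * c := by
  haveI : NeZero m := ⟨by omega⟩
  obtain ⟨t, ht⟩ := (cast_eq_zero_iff' hm hpm a).1 h
  refine ⟨(t : ZMod m), ?_⟩
  have h2 : ((a.val : ℕ) : ZMod m) = a := ZMod.natCast_rightInverse a
  rw [← h2, ht]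
  push_cast
  ring

lemma surj_of_surj_mod (hm : 2 ≤ m) {ι M : Type*} [AddCommGroup M]
    (φ : M →+ (ι → ZMod m))
    (h : ∀ (p : ℕ) (hp : p.Prime) (hpm : p ∣ m), ∀ y : ι → ZMod m,
      ∃ x : M, ∀ k, ZMod.castHom hpm (ZMod p) (φ x k) = ZMod.castHom hpm (ZMod p) (y k)) :
    Function.Surjective φ := by
  classical
  have hstep : ∀ (p : ℕ), p.Prime → p ∣ m → ∀ y : ι → ZMod m,
      ∃ x : M, ∃ w : ι → ZMod m, y = φ x + fun k => (p : ZMod m) * w k := by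
    intro p hp hpm y
    obtain ⟨x, hx⟩ := h p hp hpm y
    have hc : ∀ k, ∃ c : ZMod m, y k - φ x k = (p : ZMod m) * c := by
      intro k
      apply exists_mul_of_cast_zero hm hpm
      rw [map_sub, hx k, sub_self]
    choose w hw using hc
    refine ⟨x, w, ?_⟩
    funext k
    simp only [Pi.add_apply]
    linear_combination hw k
  have key : ∀ d : ℕ, d ∣ m → ∀ y : ι → ZMod m,
      ∃ x : M, ∃ w : ι → ZMod m, y = φ x + fun k => (d : ZMod m) * w k := by
    intro d
    induction d using Nat.strong_induction_on with
    | _ d IH =>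
      intro hdm y
      rcases Nat.eq_zero_or_pos d with hd0 | hdpos
      · subst hd0; exact absurd (Nat.eq_zero_of_zero_dvd hdm) (by omega)
      rcases eq_or_lt_of_le (show 1 ≤ d from hdpos) with hd1 | hd2
      · refine ⟨0, y, ?_⟩
        funext k
        simp [← hd1]
      · set p := d.minFac with hpdef
        have hp : p.Prime := Nat.minFac_prime (by omega)
        obtain ⟨e, he⟩ := Nat.minFac_dvd d
        have he0 : 0 < e := by
          rcases Nat.eq_zero_or_pos e with h0 | h
          · subst h0; simp at he; omega
          · exact h
        have hed : e < d := by nlinarith [hp.two_le]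
        have hem : e ∣ m := dvd_trans ⟨p, by rw [he]; ring⟩ hdm
        obtain ⟨x, w, hw⟩ := IH e hed hem y
        obtain ⟨x', w', hw'⟩ := hstep p hp (dvd_trans (Nat.minFac_dvd d) hdm) w
        refine ⟨x + e • x', w', ?_⟩
        funext k
        have h1 := congrFun hw k
        have h2 := congrFun hw' k
        simp only [Pi.add_apply, map_add, map_nsmul, Pi.smul_apply, nsmul_eq_mul, Pi.mul_apply, Pi.natCast_apply] at h1 h2 ⊢
        rw [h1, h2, he]
        push_cast
        ring
  intro y
  obtain ⟨x, w, hw⟩ := key m dvd_rfl y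
  refine ⟨x, ?_⟩
  funext k
  have h3 := congrFun hw k
  simp only [Pi.add_apply] at h3
  rw [h3, ZMod.natCast_self]
  ring


lemma meas_of_surj {μ : Measure (ℤ → ZMod m)} (hμ : IsUniformBernoulli m μ) (hm : 2 ≤ m)
    (s : Finset ℤ) {κ : Type} [Fintype κ] [DecidableEq κ]
    (ψ : κ → ((ℤ → ZMod m) →+ ZMod m))
    (hsupp : ∀ k x y, (∀ i ∈ s, x i = y i) → ψ k x = ψ k y)
    (hsurj : ∀ y : κ → ZMod m, ∃ x, ∀ k, ψ k x = y k) (y : κ → ZMod m) :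
    μ {x | ∀ k, ψ k x = y k} = ((m : ENNReal))⁻¹ ^ (Fintype.card κ) := by
  classical
  haveI : NeZero m := ⟨by omega⟩
  have hext_add : ∀ a b : {i // i ∈ s} → ZMod m, ext s (a + b) = ext s a + ext s b := by
    intro a b; funext i; by_cases h : i ∈ s <;> simp [ext, h]
  have hext_zero : ext s (0 : {i // i ∈ s} → ZMod m) = 0 := by
    funext i; by_cases h : i ∈ s <;> simp [ext, h]
  set Φ : ({i // i ∈ s} → ZMod m) →+ (κ → ZMod m) :=
    { toFun := fun a k => ψ k (ext s a)
      map_zero' := by funext k; show ψ k (ext s 0) = 0; rw [hext_zero]; simp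
      map_add' := by
        intro a b; funext k
        show ψ k (ext s (a + b)) = ψ k (ext s a) + ψ k (ext s b)
        rw [hext_add]; simp } with hΦ
  have hΦapp : ∀ a k, Φ a k = ψ k (ext s a) := fun a k => rfl
  have hre : ∀ (x : ℤ → ZMod m) k, ψ k (ext s (rst s x)) = ψ k x := by
    intro x k
    apply hsupp
    intro i hi; simp [ext, rst, hi]
  have hset : {x : ℤ → ZMod m | ∀ k, ψ k x = y k}
      = {x | rst s x ∈ Finset.univ.filter (fun a => Φ a = y)} := by
    ext x
    simp only [Set.mem_setOf_eq, Finset.mem_filter, Finset.mem_univ, true_and]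
    constructor
    · intro h; funext k; rw [hΦapp, hre x k]; exact h k
    · intro h k
      have h2 := congrFun h k
      rw [hΦapp, hre x k] at h2
      exact h2
  rw [hset, meas_restrict hμ]
  have hΦs : Function.Surjective Φ := by
    intro y'
    obtain ⟨x, hx⟩ := hsurj y'
    exact ⟨rst s x, funext fun k => by rw [hΦapp, hre x k]; exact hx k⟩
  have hcard := card_fiber Φ hΦs y
  have hG : Fintype.card ({i // i ∈ s} → ZMod m) = m ^ s.card := by
    simp [Fintype.card_fun, ZMod.card, Fintype.card_coe]
  have hH : Fintype.card (κ → ZMod m) = m ^ Fintype.card κ := by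
    simp [Fintype.card_fun, ZMod.card]
  rw [hG, hH] at hcard
  set c := (Finset.univ.filter (fun a => Φ a = y)).card with hcdef
  have hc : (c : ENNReal) * (m : ENNReal) ^ (Fintype.card κ) = (m : ENNReal) ^ s.card := by
    exact_mod_cast congrArg (Nat.cast : ℕ → ENNReal) hcard
  have hm0 : (m : ENNReal) ≠ 0 := by simp; omega
  have hmt : (m : ENNReal) ≠ ⊤ := by simp
  have h1 : (m : ENNReal) ^ (Fintype.card κ) ≠ 0 := pow_ne_zero _ hm0
  have h2 : (m : ENNReal) ^ (Fintype.card κ) ≠ ⊤ := ENNReal.pow_ne_top hmt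
  have h3 : (m : ENNReal) ^ s.card ≠ 0 := pow_ne_zero _ hm0
  have h4 : (m : ENNReal) ^ s.card ≠ ⊤ := ENNReal.pow_ne_top hmt
  rw [← ENNReal.inv_pow, ← ENNReal.inv_pow]
  calc (c : ENNReal) * ((m : ENNReal) ^ s.card)⁻¹
      = ((c : ENNReal) * (m : ENNReal) ^ (Fintype.card κ) * ((m : ENNReal) ^ (Fintype.card κ))⁻¹)
        * ((m : ENNReal) ^ s.card)⁻¹ := by
        rw [mul_assoc (c : ENNReal), ENNReal.mul_inv_cancel h1 h2, mul_one]
    _ = (m : ENNReal) ^ s.card * ((m : ENNReal) ^ s.card)⁻¹ * ((m : ENNReal) ^ (Fintype.card κ))⁻¹ := by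
        rw [hc]; ring
    _ = ((m : ENNReal) ^ (Fintype.card κ))⁻¹ := by
        rw [ENNReal.mul_inv_cancel h3 h4, one_mul]

section CAprops
variable {l r : ℤ} {lam : ℤ → ZMod m}

lemma cellAuto_apply (z : ℤ → ZMod m) (i : ℤ) :
    cellAuto m l r lam z i = ∑ j ∈ Finset.Icc l r, lam j * z (i + j) := rfl

lemma cellAuto_add (x y : ℤ → ZMod m) :
    cellAuto m l r lam (x + y) = cellAuto m l r lam x + cellAuto m l r lam y := by
  funext i; simp [cellAuto, mul_add, Finset.sum_add_distrib]

lemma iterate_add (n : ℕ) (x y : ℤ → ZMod m) :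
    (cellAuto m l r lam)^[n] (x + y)
      = (cellAuto m l r lam)^[n] x + (cellAuto m l r lam)^[n] y := by
  induction n with
  | zero => simp
  | succ n ih =>
    rw [Function.iterate_succ_apply', Function.iterate_succ_apply',
      Function.iterate_succ_apply', ih, cellAuto_add]

lemma measurable_cellAuto (hm : 2 ≤ m) : Measurable (cellAuto m l r lam) := by
  haveI : NeZero m := ⟨by omega⟩
  apply measurable_pi_lambda
  intro i
  have hrestr : Measurable (fun (x : ℤ → ZMod m) (j : {j // j ∈ Finset.Icc l r}) => x (i + j.1)) :=
    measurable_pi_lambda _ fun j => measurable_pi_apply _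
  have : (fun x : ℤ → ZMod m => cellAuto m l r lam x i)
      = (fun a : {j // j ∈ Finset.Icc l r} → ZMod m =>
          ∑ j ∈ Finset.Icc l r |>.attach, lam j.1 * a j)
        ∘ (fun (x : ℤ → ZMod m) (j : {j // j ∈ Finset.Icc l r}) => x (i + j.1)) := by
    funext x
    rw [cellAuto_apply, ← Finset.sum_attach (Finset.Icc l r) (fun j => lam j * x (i + j))]
    rfl
  rw [this]
  exact Measurable.of_discrete.comp hrestr

lemma iterate_local (n : ℕ) (x y : ℤ → ZMod m) (i : ℤ)
    (h : ∀ j ∈ Finset.Icc (i + n * l) (i + n * r), x j = y j) :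
    (cellAuto m l r lam)^[n] x i = (cellAuto m l r lam)^[n] y i := by
  induction n generalizing i with
  | zero => simpa using h i (by simp)
  | succ n ih =>
    rw [Function.iterate_succ_apply', Function.iterate_succ_apply',
      cellAuto_apply, cellAuto_apply]
    apply Finset.sum_congr rfl
    intro j hj
    rw [Finset.mem_Icc] at hj
    rw [ih (i + j) ?_]
    intro j' hj'
    rw [Finset.mem_Icc] at hj'
    apply h
    rw [Finset.mem_Icc]
    push_cast at hj' ⊢
    constructor <;> nlinarith [hj.1, hj.2, hj'.1, hj'.2]

lemma cast_cellAuto (hm : 2 ≤ m) {p : ℕ} (hpm : p ∣ m) (j₀ : ℤ)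
    (hj₀ : l ≤ j₀ ∧ j₀ ≤ r ∧ ¬ p ∣ (lam j₀).val)
    (huniq : ∀ j, l ≤ j → j ≤ r → ¬ p ∣ (lam j).val → j = j₀)
    (x : ℤ → ZMod m) (i : ℤ) :
    ZMod.castHom hpm (ZMod p) (cellAuto m l r lam x i)
      = ZMod.castHom hpm (ZMod p) (lam j₀) * ZMod.castHom hpm (ZMod p) (x (i + j₀)) := by
  unfold cellAuto
  rw [map_sum, Finset.sum_eq_single j₀]
  · rw [map_mul]
  · intro j hj hne
    rw [Finset.mem_Icc] at hj
    rw [map_mul]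
    have h0 : ZMod.castHom hpm (ZMod p) (lam j) = 0 := by
      rw [cast_eq_zero_iff' hm hpm]
      by_contra hc
      exact hne (huniq j hj.1 hj.2 hc)
    rw [h0, zero_mul]
  · intro hni
    exact absurd (Finset.mem_Icc.2 ⟨hj₀.1, hj₀.2.1⟩) hni

lemma cast_iterate (hm : 2 ≤ m) {p : ℕ} (hpm : p ∣ m) (j₀ : ℤ)
    (hj₀ : l ≤ j₀ ∧ j₀ ≤ r ∧ ¬ p ∣ (lam j₀).val)
    (huniq : ∀ j, l ≤ j → j ≤ r → ¬ p ∣ (lam j).val → j = j₀)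
    (n : ℕ) (x : ℤ → ZMod m) (i : ℤ) :
    ZMod.castHom hpm (ZMod p) ((cellAuto m l r lam)^[n] x i)
      = (ZMod.castHom hpm (ZMod p) (lam j₀)) ^ n
        * ZMod.castHom hpm (ZMod p) (x (i + n * j₀)) := by
  induction n generalizing x i with
  | zero => simp
  | succ n ih =>
    rw [Function.iterate_succ_apply, ih (cellAuto m l r lam x) i,
      cast_cellAuto hm hpm j₀ hj₀ huniq]
    have harith : i + (n : ℤ) * j₀ + j₀ = i + ((n : ℕ) + 1 : ℤ) * j₀ := by push_cast; ring
    rw [harith]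
    push_cast
    ring

lemma cellAuto_zero : cellAuto m l r lam 0 = 0 := by
  funext i; simp [cellAuto_apply]

lemma iterate_map_zero (n : ℕ) : (cellAuto m l r lam)^[n] (0 : ℤ → ZMod m) = 0 := by
  induction n with
  | zero => rfl
  | succ n ih => rw [Function.iterate_succ_apply', ih, cellAuto_zero]

end CAprops

noncomputable def iterHom (l r : ℤ) (lam : ℤ → ZMod m) (n : ℕ) (i : ℤ) :
    (ℤ → ZMod m) →+ ZMod m where
  toFun x := (cellAuto m l r lam)^[n] x i
  map_zero' := by
    show (cellAuto m l r lam)^[n] 0 i = 0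
    rw [iterate_map_zero]; rfl
  map_add' x y := by
    show (cellAuto m l r lam)^[n] (x + y) i = _
    rw [iterate_add]; rfl

noncomputable def evalHom (i : ℤ) : (ℤ → ZMod m) →+ ZMod m where
  toFun x := x i
  map_zero' := rfl
  map_add' _ _ := rfl

section Mixing
variable {l r : ℤ} {lam : ℤ → ZMod m}

lemma abs_le_of_natAbs_le {t : ℤ} {M : ℕ} (h : t.natAbs ≤ M) : -(M:ℤ) ≤ t ∧ t ≤ M := by
  omega

set_option maxHeartbeats 2000000 in
lemma mixing (hm : 2 ≤ m) {μ : Measure (ℤ → ZMod m)} (hμ : IsUniformBernoulli m μ)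
    (hinv' : ∀ (p : ℕ), p.Prime → ∀ (hpm : p ∣ m), ∃ j₀ : ℤ, j₀ ≠ 0 ∧
      (l ≤ j₀ ∧ j₀ ≤ r ∧ ¬ p ∣ (lam j₀).val) ∧
      (∀ j, l ≤ j → j ≤ r → ¬ p ∣ (lam j).val → j = j₀))
    (sB sC : Finset ℤ) :
    ∃ N : ℕ, ∀ n ≥ N, ∀ (b c : ℤ → ZMod m),
      μ {x | (∀ i ∈ sB, (cellAuto m l r lam)^[n] x i = b i) ∧ (∀ i ∈ sC, x i = c i)}
        = ((m:ENNReal))⁻¹ ^ sB.card * ((m:ENNReal))⁻¹ ^ sC.card := by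
  classical
  haveI : NeZero m := ⟨by omega⟩
  set M : ℕ := (sB ∪ sC).sup (fun t => t.natAbs) with hM
  have hMB : ∀ i ∈ sB, -(M:ℤ) ≤ i ∧ i ≤ M := fun i hi =>
    abs_le_of_natAbs_le (Finset.le_sup (f := fun t => t.natAbs) (Finset.mem_union_left _ hi))
  have hMC : ∀ i ∈ sC, -(M:ℤ) ≤ i ∧ i ≤ M := fun i hi =>
    abs_le_of_natAbs_le (Finset.le_sup (f := fun t => t.natAbs) (Finset.mem_union_right _ hi))
  refine ⟨2 * M + 1, fun n hn b c => ?_⟩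
  set K : ℕ := M + n * (l.natAbs + r.natAbs) with hK
  set s : Finset ℤ := Finset.Icc (-(K:ℤ)) K with hs
  set κ := ({i // i ∈ sB} ⊕ {i // i ∈ sC}) with hκ
  set ψ : κ → ((ℤ → ZMod m) →+ ZMod m) :=
    Sum.elim (fun i => iterHom l r lam n i.1) (fun i => evalHom i.1) with hψ
  have hψl : ∀ i (x : ℤ → ZMod m), ψ (Sum.inl i) x = (cellAuto m l r lam)^[n] x i.1 :=
    fun i x => rfl
  have hψr : ∀ i (x : ℤ → ZMod m), ψ (Sum.inr i) x = x i.1 := fun i x => rfl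
  -- support bounds
  have hwind : ∀ i : ℤ, -(M:ℤ) ≤ i → i ≤ M →
      ∀ j ∈ Finset.Icc (i + (n:ℤ) * l) (i + (n:ℤ) * r), j ∈ s := by
    intro i hi1 hi2 j hj
    rw [Finset.mem_Icc] at hj
    rw [hs, Finset.mem_Icc, hK]
    have hl1 : -(l.natAbs : ℤ) ≤ l ∧ l ≤ l.natAbs := by omega
    have hr1 : -(r.natAbs : ℤ) ≤ r ∧ r ≤ r.natAbs := by omega
    have hn0 : (0:ℤ) ≤ (n:ℤ) := Int.natCast_nonneg n
    have h2 : (n:ℤ) * l ≥ -((n:ℤ) * l.natAbs) := by nlinarith [hl1.1]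
    have h3 : (n:ℤ) * r ≤ (n:ℤ) * r.natAbs := by nlinarith [hr1.2]
    have h4 : (n:ℤ) * l.natAbs ≤ (n:ℤ) * (l.natAbs + r.natAbs) := by nlinarith
    have h5 : (n:ℤ) * r.natAbs ≤ (n:ℤ) * (l.natAbs + r.natAbs) := by nlinarith
    simp only [Nat.cast_add, Nat.cast_mul]
    constructor <;> nlinarith [hj.1, hj.2]
  have hsupp : ∀ (k : κ) (x y : ℤ → ZMod m), (∀ i ∈ s, x i = y i) → ψ k x = ψ k y := by
    intro k x y hxy
    cases k with
    | inl i =>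
      rw [hψl, hψl]
      apply iterate_local
      intro j hj
      exact hxy j (hwind i.1 (hMB i.1 i.2).1 (hMB i.1 i.2).2 j hj)
    | inr i =>
      rw [hψr, hψr]
      apply hxy
      rw [hs, Finset.mem_Icc, hK]
      have hmc := hMC i.1 i.2
      have hpos : (0:ℤ) ≤ (n:ℤ) * ((l.natAbs : ℤ) + r.natAbs) := by positivity
      simp only [Nat.cast_add, Nat.cast_mul]
      omega
  -- joint hom
  set φ : (ℤ → ZMod m) →+ (κ → ZMod m) :=
    { toFun := fun x k => ψ k x
      map_zero' := by funext k; exact map_zero (ψ k)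
      map_add' := fun x y => by funext k; exact map_add (ψ k) x y } with hφ
  have hφapp : ∀ x k, φ x k = ψ k x := fun x k => rfl
  -- surjectivity
  have hsurj : ∀ y : κ → ZMod m, ∃ x, ∀ k, ψ k x = y k := by
    have hS : Function.Surjective φ := by
      apply surj_of_surj_mod hm
      intro p hp hpm y
      haveI : Fact p.Prime := ⟨hp⟩
      obtain ⟨j₀, hj0ne, hj₀, huniq⟩ := hinv' p hp hpm
      set π := ZMod.castHom hpm (ZMod p) with hπ
      set u := π (lam j₀) with hu
      have hune : u ≠ 0 := by
        rw [hu, Ne, cast_eq_zero_iff' hm hpm]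
        exact hj₀.2.2
      have hupow : u ^ n ≠ 0 := pow_ne_zero _ hune
      set lift : ZMod p → ZMod m := fun t => (t.val : ZMod m) with hliftdef
      have hlift : ∀ t, π (lift t) = t := by
        intro t
        rw [hliftdef]
        simp only [map_natCast]
        exact ZMod.natCast_rightInverse t
      refine ⟨fun t => if h : t ∈ sC then y (Sum.inr ⟨t, h⟩)
        else if h' : t - (n:ℤ) * j₀ ∈ sB then
          lift ((u ^ n)⁻¹ * π (y (Sum.inl ⟨t - (n:ℤ) * j₀, h'⟩))) else 0, ?_⟩
      intro k
      cases k with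
      | inr i =>
        rw [hφapp, hψr]
        rw [dif_pos i.2]
      | inl i =>
        rw [hφapp, hψl]
        rw [cast_iterate hm hpm j₀ hj₀ huniq]
        have hnotC : i.1 + (n:ℤ) * j₀ ∉ sC := by
          intro hmem
          have h1 := hMB i.1 i.2
          have h2 := hMC _ hmem
          have hj1 : 1 ≤ |j₀| := by
            rcases lt_trichotomy j₀ 0 with h | h | h
            · rw [abs_of_neg h]; omega
            · exact absurd h hj0ne
            · rw [abs_of_pos h]; omega
          have hnn : (2 * M + 1 : ℤ) ≤ (n:ℤ) := by exact_mod_cast hn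
          have habs : (n:ℤ) ≤ |(n:ℤ) * j₀| := by
            rw [abs_mul, abs_of_nonneg (Int.natCast_nonneg n)]
            nlinarith [Int.natCast_nonneg n]
          have htri : |(n:ℤ) * j₀| ≤ |i.1 + (n:ℤ) * j₀| + |i.1| := by
            have h := abs_sub (i.1 + (n:ℤ) * j₀) i.1
            have he : i.1 + (n:ℤ) * j₀ - i.1 = (n:ℤ) * j₀ := by ring
            rwa [he] at h
          have hb1 : |i.1| ≤ M := abs_le.2 ⟨h1.1, h1.2⟩
          have hb2 : |i.1 + (n:ℤ) * j₀| ≤ M := abs_le.2 ⟨h2.1, h2.2⟩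
          linarith
        rw [dif_neg hnotC]
        have harith : i.1 + (n:ℤ) * j₀ - (n:ℤ) * j₀ = i.1 := by ring
        simp only [harith]
        rw [dif_pos i.2]
        rw [hlift]
        rw [← mul_assoc, mul_inv_cancel₀ hupow, one_mul]
    intro y
    obtain ⟨x, hx⟩ := hS y
    exact ⟨x, fun k => by rw [← hφapp, hx]⟩
  -- apply the uniform law
  have hset : {x : ℤ → ZMod m |
        (∀ i ∈ sB, (cellAuto m l r lam)^[n] x i = b i) ∧ (∀ i ∈ sC, x i = c i)}
      = {x | ∀ k : κ, ψ k x = Sum.elim (fun i : {i // i ∈ sB} => b i.1)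
          (fun i : {i // i ∈ sC} => c i.1) k} := by
    ext x
    simp only [Set.mem_setOf_eq]
    constructor
    · rintro ⟨h1, h2⟩ k
      cases k with
      | inl i => rw [hψl]; exact h1 i.1 i.2
      | inr i => rw [hψr]; exact h2 i.1 i.2
    · intro h
      exact ⟨fun i hi => h (Sum.inl ⟨i, hi⟩), fun i hi => h (Sum.inr ⟨i, hi⟩)⟩
  rw [hset, meas_of_surj hμ hm s ψ hsupp hsurj]
  have hkc : Fintype.card κ = Fintype.card {i // i ∈ sB} + Fintype.card {i // i ∈ sC} :=
    Fintype.card_sum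
  rw [Fintype.card_coe, Fintype.card_coe] at hkc
  rw [hkc, pow_add]

end Mixing

def cylSets (m : ℕ) : Set (Set (ℤ → ZMod m)) :=
  {A | ∃ (s : Finset ℤ) (a : ℤ → ZMod m), A = {x | ∀ i ∈ s, x i = a i}}

lemma isPiSystem_cyl : IsPiSystem (cylSets m) := by
  rintro A ⟨s, a, rfl⟩ B ⟨t, b, rfl⟩ hne
  obtain ⟨x₀, hx₀⟩ := hne
  refine ⟨s ∪ t, fun i => if i ∈ s then a i else b i, ?_⟩
  ext x
  simp only [Set.mem_inter_iff, Set.mem_setOf_eq, Finset.mem_union]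
  constructor
  · rintro ⟨h1, h2⟩ i hi
    by_cases h : i ∈ s
    · rw [if_pos h]; exact h1 i h
    · rw [if_neg h]
      rcases hi with hi | hi
      · exact absurd hi h
      · exact h2 i hi
  · intro h
    constructor
    · intro i hi
      have h3 := h i (Or.inl hi)
      rwa [if_pos hi] at h3
    · intro i hi
      have h3 := h i (Or.inr hi)
      by_cases hsi : i ∈ s
      · rw [if_pos hsi] at h3
        rw [h3, ← hx₀.1 i hsi]
        exact hx₀.2 i hi
      · rwa [if_neg hsi] at h3

lemma eval_preimage_mem (hm : 2 ≤ m) (i : ℤ) (E : Set (ZMod m)) :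
    MeasurableSet[MeasurableSpace.generateFrom (cylSets m)]
      ((fun x : ℤ → ZMod m => x i) ⁻¹' E) := by
  haveI : NeZero m := ⟨by omega⟩
  have h : (fun x : ℤ → ZMod m => x i) ⁻¹' E
      = ⋃ a ∈ E, {x : ℤ → ZMod m | ∀ j ∈ ({i} : Finset ℤ), x j = (fun _ => a) j} := by
    ext x; simp
  rw [h]
  exact MeasurableSet.biUnion E.to_countable
    (fun a _ => MeasurableSpace.measurableSet_generateFrom ⟨{i}, fun _ => a, rfl⟩)

lemma pi_eq_generateFrom_cyl (hm : 2 ≤ m) :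
    (inferInstance : MeasurableSpace (ℤ → ZMod m))
      = MeasurableSpace.generateFrom (cylSets m) := by
  apply le_antisymm
  · show (⨆ i : ℤ, MeasurableSpace.comap (fun x : ℤ → ZMod m => x i)
      (inferInstance : MeasurableSpace (ZMod m))) ≤ _
    refine iSup_le fun i => ?_
    intro A hA
    obtain ⟨E, -, rfl⟩ := hA
    exact eval_preimage_mem hm i E
  · apply MeasurableSpace.generateFrom_le
    rintro A ⟨s, a, rfl⟩
    exact measurableSet_cyl s a

section Preserve
variable {l r : ℤ} {lam : ℤ → ZMod m}

lemma meas_iter_cyl (hm : 2 ≤ m) {μ : Measure (ℤ → ZMod m)} (hμ : IsUniformBernoulli m μ)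
    (hbij : Function.Bijective (cellAuto m l r lam)) (n : ℕ) (s : Finset ℤ) (a : ℤ → ZMod m) :
    μ {x | ∀ i ∈ s, (cellAuto m l r lam)^[n] x i = a i} = ((m:ENNReal))⁻¹ ^ s.card := by
  classical
  haveI : NeZero m := ⟨by omega⟩
  set M : ℕ := s.sup (fun t => t.natAbs) with hM
  have hMs : ∀ i ∈ s, -(M:ℤ) ≤ i ∧ i ≤ M := fun i hi =>
    abs_le_of_natAbs_le (Finset.le_sup (f := fun t => t.natAbs) hi)
  set K : ℕ := M + n * (l.natAbs + r.natAbs) with hK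
  set w : Finset ℤ := Finset.Icc (-(K:ℤ)) K with hw
  have hwind : ∀ i : ℤ, -(M:ℤ) ≤ i → i ≤ M →
      ∀ j ∈ Finset.Icc (i + (n:ℤ) * l) (i + (n:ℤ) * r), j ∈ w := by
    intro i hi1 hi2 j hj
    rw [Finset.mem_Icc] at hj
    rw [hw, Finset.mem_Icc, hK]
    have hl1 : -(l.natAbs : ℤ) ≤ l ∧ l ≤ l.natAbs := by omega
    have hr1 : -(r.natAbs : ℤ) ≤ r ∧ r ≤ r.natAbs := by omega
    have hn0 : (0:ℤ) ≤ (n:ℤ) := Int.natCast_nonneg n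
    have h2 : (n:ℤ) * l ≥ -((n:ℤ) * l.natAbs) := by nlinarith [hl1.1]
    have h3 : (n:ℤ) * r ≤ (n:ℤ) * r.natAbs := by nlinarith [hr1.2]
    have h4 : (n:ℤ) * l.natAbs ≤ (n:ℤ) * (l.natAbs + r.natAbs) := by nlinarith
    have h5 : (n:ℤ) * r.natAbs ≤ (n:ℤ) * (l.natAbs + r.natAbs) := by nlinarith
    simp only [Nat.cast_add, Nat.cast_mul]
    constructor <;> nlinarith [hj.1, hj.2]
  have hset : {x : ℤ → ZMod m | ∀ i ∈ s, (cellAuto m l r lam)^[n] x i = a i}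
      = {x | ∀ k : {i // i ∈ s}, iterHom l r lam n k.1 x = a k.1} := by
    ext x
    exact ⟨fun h k => h k.1 k.2, fun h i hi => h ⟨i, hi⟩⟩
  rw [hset, meas_of_surj hμ hm w (fun k : {i // i ∈ s} => iterHom l r lam n k.1)
    ?_ ?_ (fun k => a k.1), Fintype.card_coe]
  · intro k x y hxy
    show (cellAuto m l r lam)^[n] x k.1 = (cellAuto m l r lam)^[n] y k.1
    apply iterate_local
    intro j hj
    exact hxy j (hwind k.1 (hMs k.1 k.2).1 (hMs k.1 k.2).2 j hj)
  · intro y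
    have hbijn : Function.Bijective ((cellAuto m l r lam)^[n]) := hbij.iterate n
    obtain ⟨x, hx⟩ := hbijn.2 (fun i => if h : i ∈ s then y ⟨i, h⟩ else 0)
    refine ⟨x, fun k => ?_⟩
    show (cellAuto m l r lam)^[n] x k.1 = y k
    rw [hx]
    simp [k.2]

lemma preserve (hm : 2 ≤ m) {μ : Measure (ℤ → ZMod m)} (hμ : IsUniformBernoulli m μ)
    (hbij : Function.Bijective (cellAuto m l r lam)) (n : ℕ)
    {A : Set (ℤ → ZMod m)} (hA : MeasurableSet A) :
    μ ((cellAuto m l r lam)^[n] ⁻¹' A) = μ A := by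
  haveI := hμ.1
  have hmeas : Measurable ((cellAuto m l r lam)^[n]) := (measurable_cellAuto hm).iterate n
  have hmap : μ.map ((cellAuto m l r lam)^[n]) = μ := by
    apply ext_of_generate_finite (cylSets m) (pi_eq_generateFrom_cyl hm) isPiSystem_cyl
    · rintro B ⟨s, a, rfl⟩
      rw [Measure.map_apply hmeas (measurableSet_cyl s a)]
      have hpre : (cellAuto m l r lam)^[n] ⁻¹' {x | ∀ i ∈ s, x i = a i}
          = {x | ∀ i ∈ s, (cellAuto m l r lam)^[n] x i = a i} := by
        ext x; simp [Set.mem_preimage]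
      rw [hpre, meas_iter_cyl hm hμ hbij n s a, hμ.2 s a]
    · rw [Measure.map_apply hmeas MeasurableSet.univ, Set.preimage_univ]
  conv_rhs => rw [← hmap]
  rw [Measure.map_apply hmeas hA]

end Preserve

def detSets (m : ℕ) : Set (Set (ℤ → ZMod m)) :=
  {A | ∃ (s : Finset ℤ) (E : Finset ({i // i ∈ s} → ZMod m)), A = {x | rst s x ∈ E}}

lemma detSets_measurable {A : Set (ℤ → ZMod m)} (hA : A ∈ detSets m) : MeasurableSet A := by
  obtain ⟨s, E, rfl⟩ := hA; exact measurableSet_rst s E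

lemma empty_mem_det : (∅ : Set (ℤ → ZMod m)) ∈ detSets m :=
  ⟨∅, ∅, by ext x; simp⟩

lemma cyl_mem_det (s : Finset ℤ) (a : ℤ → ZMod m) :
    {x : ℤ → ZMod m | ∀ i ∈ s, x i = a i} ∈ detSets m := by
  classical
  refine ⟨s, {fun i => a i.1}, ?_⟩
  ext x
  simp only [Set.mem_setOf_eq, Finset.mem_singleton]
  constructor
  · intro h; funext i; exact h i.1 i.2
  · intro h i hi; exact congrFun h ⟨i, hi⟩

lemma compl_mem_det (hm : 2 ≤ m) {A : Set (ℤ → ZMod m)} (hA : A ∈ detSets m) :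
    Aᶜ ∈ detSets m := by
  classical
  haveI : NeZero m := ⟨by omega⟩
  obtain ⟨s, E, rfl⟩ := hA
  exact ⟨s, Eᶜ, by ext x; simp⟩

lemma det_lift (hm : 2 ≤ m) {s t : Finset ℤ} (hsub : s ⊆ t)
    (E : Finset ({i // i ∈ s} → ZMod m)) :
    ∃ F : Finset ({i // i ∈ t} → ZMod m),
      {x : ℤ → ZMod m | rst s x ∈ E} = {x | rst t x ∈ F} := by
  classical
  haveI : NeZero m := ⟨by omega⟩
  refine ⟨Finset.univ.filter (fun g => (fun i : {i // i ∈ s} => g ⟨i.1, hsub i.2⟩) ∈ E), ?_⟩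
  ext x
  simp only [Set.mem_setOf_eq, Finset.mem_filter, Finset.mem_univ, true_and]
  rfl

lemma union_mem_det (hm : 2 ≤ m) {A B : Set (ℤ → ZMod m)} (hA : A ∈ detSets m)
    (hB : B ∈ detSets m) : A ∪ B ∈ detSets m := by
  classical
  obtain ⟨s, E, rfl⟩ := hA
  obtain ⟨t, F, rfl⟩ := hB
  obtain ⟨E', hE'⟩ := det_lift hm (Finset.subset_union_left (s₂ := t)) E
  obtain ⟨F', hF'⟩ := det_lift hm (Finset.subset_union_right (s₁ := s)) F
  refine ⟨s ∪ t, E' ∪ F', ?_⟩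
  rw [hE', hF']
  ext x; simp [Finset.mem_union]

section DetMix
variable {l r : ℤ} {lam : ℤ → ZMod m}

lemma det_mixing (hm : 2 ≤ m) {μ : Measure (ℤ → ZMod m)} (hμ : IsUniformBernoulli m μ)
    (hinv' : ∀ (p : ℕ), p.Prime → ∀ (hpm : p ∣ m), ∃ j₀ : ℤ, j₀ ≠ 0 ∧
      (l ≤ j₀ ∧ j₀ ≤ r ∧ ¬ p ∣ (lam j₀).val) ∧
      (∀ j, l ≤ j → j ≤ r → ¬ p ∣ (lam j).val → j = j₀))
    {A B : Set (ℤ → ZMod m)} (hA : A ∈ detSets m) (hB : B ∈ detSets m) :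
    ∃ N, ∀ n ≥ N, μ ((cellAuto m l r lam)^[n] ⁻¹' A ∩ B) = μ A * μ B := by
  classical
  haveI : NeZero m := ⟨by omega⟩
  obtain ⟨sA, E, rfl⟩ := hA
  obtain ⟨sB, F, rfl⟩ := hB
  obtain ⟨N, hN⟩ := mixing hm hμ hinv' sA sB
  refine ⟨N, fun n hn => ?_⟩
  have hTmeas : Measurable ((cellAuto m l r lam)^[n]) := (measurable_cellAuto hm).iterate n
  have hset : (cellAuto m l r lam)^[n] ⁻¹' {x | rst sA x ∈ E} ∩ {x | rst sB x ∈ F}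
      = ⋃ q ∈ E ×ˢ F, {x : ℤ → ZMod m |
          (∀ i ∈ sA, (cellAuto m l r lam)^[n] x i = ext sA q.1 i)
          ∧ (∀ i ∈ sB, x i = ext sB q.2 i)} := by
    ext x
    simp only [Set.mem_inter_iff, Set.mem_preimage, Set.mem_setOf_eq, Set.mem_iUnion,
      Finset.mem_product]
    constructor
    · rintro ⟨h1, h2⟩
      refine ⟨(rst sA ((cellAuto m l r lam)^[n] x), rst sB x), ⟨h1, h2⟩, ?_, ?_⟩
      · intro i hi; simp [ext, rst, hi]
      · intro i hi; simp [ext, rst, hi]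
    · rintro ⟨q, ⟨hq1, hq2⟩, h1, h2⟩
      constructor
      · have hfe : rst sA ((cellAuto m l r lam)^[n] x) = q.1 := funext fun i => by
          have := h1 i.1 i.2; simpa [ext, i.2, rst] using this
        rwa [hfe]
      · have hfe : rst sB x = q.2 := funext fun i => by
          have := h2 i.1 i.2; simpa [ext, i.2, rst] using this
        rwa [hfe]
  have hmeasq : ∀ q : ({i // i ∈ sA} → ZMod m) × ({i // i ∈ sB} → ZMod m),
      MeasurableSet {x : ℤ → ZMod m |
        (∀ i ∈ sA, (cellAuto m l r lam)^[n] x i = ext sA q.1 i)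
        ∧ (∀ i ∈ sB, x i = ext sB q.2 i)} := by
    intro q
    have heq : {x : ℤ → ZMod m |
        (∀ i ∈ sA, (cellAuto m l r lam)^[n] x i = ext sA q.1 i)
        ∧ (∀ i ∈ sB, x i = ext sB q.2 i)}
      = ((cellAuto m l r lam)^[n] ⁻¹' {x | ∀ i ∈ sA, x i = ext sA q.1 i})
        ∩ {x | ∀ i ∈ sB, x i = ext sB q.2 i} := by
      ext x; simp [Set.mem_preimage]
    rw [heq]
    exact (hTmeas (measurableSet_cyl _ _)).inter (measurableSet_cyl _ _)
  rw [hset, measure_biUnion_finset ?disj (fun q _ => hmeasq q)]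
  case disj =>
    intro q hq q' hq' hne
    apply Set.disjoint_left.2
    rintro x ⟨hx1, hx2⟩ ⟨hx1', hx2'⟩
    apply hne
    have e1 : q.1 = q'.1 := funext fun i => by
      have a1 := hx1 i.1 i.2; have a2 := hx1' i.1 i.2
      simp only [ext, i.2, dif_pos] at a1 a2
      rw [← a1, ← a2]
    have e2 : q.2 = q'.2 := funext fun i => by
      have a1 := hx2 i.1 i.2; have a2 := hx2' i.1 i.2
      simp only [ext, i.2, dif_pos] at a1 a2
      rw [← a1, ← a2]
    exact Prod.ext e1 e2
  rw [Finset.sum_congr rfl (fun q _ => hN n hn (ext sA q.1) (ext sB q.2))]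
  rw [Finset.sum_const, Finset.card_product]
  rw [meas_restrict hμ sA E, meas_restrict hμ sB F]
  simp only [nsmul_eq_mul]
  push_cast
  ring

end DetMix

lemma biUnion_mem_det (hm : 2 ≤ m) (k : ℕ) (B : ℕ → Set (ℤ → ZMod m))
    (h : ∀ i, B i ∈ detSets m) : (⋃ i ∈ Finset.range k, B i) ∈ detSets m := by
  induction k with
  | zero => simpa using empty_mem_det
  | succ k ih =>
    have heq : (⋃ i ∈ Finset.range (k+1), B i) = (⋃ i ∈ Finset.range k, B i) ∪ B k := by
      ext x
      simp only [Set.mem_iUnion, Finset.mem_range, Set.mem_union]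
      constructor
      · rintro ⟨i, hi, hx⟩
        rcases Nat.lt_succ_iff_lt_or_eq.mp hi with h' | h'
        · exact Or.inl ⟨i, h', hx⟩
        · subst h'; exact Or.inr hx
      · rintro (⟨i, hi, hx⟩ | hx)
        · exact ⟨i, by omega, hx⟩
        · exact ⟨k, by omega, hx⟩
    rw [heq]
    exact union_mem_det hm ih (h k)

lemma approx (hm : 2 ≤ m) {μ : Measure (ℤ → ZMod m)} (hμ : IsUniformBernoulli m μ)
    {A : Set (ℤ → ZMod m)} (hA : MeasurableSet A) (ε : ENNReal) (hε : 0 < ε) :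
    ∃ B ∈ detSets m, μ (symmDiff A B) ≤ ε := by
  classical
  haveI := hμ.1
  have main := MeasurableSpace.induction_on_inter
    (C := fun t _ => ∀ ε : ENNReal, 0 < ε → ∃ B ∈ detSets m, μ (symmDiff t B) ≤ ε)
    (pi_eq_generateFrom_cyl hm) isPiSystem_cyl
    ?empty ?basic ?compl ?union A hA
  · exact main ε hε
  case empty =>
    intro ε hε
    exact ⟨∅, empty_mem_det, by simp⟩
  case basic =>
    rintro t ⟨s, a, rfl⟩ ε hε
    exact ⟨_, cyl_mem_det s a, by simp⟩
  case compl =>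
    rintro t htmeas hC ε hε
    obtain ⟨B, hBdet, hBsd⟩ := hC ε hε
    exact ⟨Bᶜ, compl_mem_det hm hBdet, by rwa [compl_symmDiff_compl]⟩
  case union =>
    intro f hdisj hfmeas hC ε hε
    have hεne : ε ≠ 0 := hε.ne'
    set S := ⋃ i, f i with hS
    have hSfin : μ S ≠ ⊤ := measure_ne_top μ S
    set U : ℕ → Set (ℤ → ZMod m) := fun k => ⋃ i ∈ Finset.range k, f i with hU
    have hUmono : Monotone U := by
      intro a b hab x hx
      simp only [hU, Set.mem_iUnion, Finset.mem_range] at hx ⊢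
      obtain ⟨i, hi, hxi⟩ := hx
      exact ⟨i, by omega, hxi⟩
    have hUS : ⋃ k, U k = S := by
      ext x
      simp only [hU, hS, Set.mem_iUnion, Finset.mem_range]
      constructor
      · rintro ⟨k, i, hik, hx⟩; exact ⟨i, hx⟩
      · rintro ⟨i, hx⟩; exact ⟨i+1, i, by omega, hx⟩
    have hUmeas : ∀ k, MeasurableSet (U k) := fun k =>
      MeasurableSet.biUnion (Finset.range k : Finset ℕ).countable_toSet (fun i _ => hfmeas i)
    have hUsubS : ∀ k, U k ⊆ S := by
      intro k x hx
      simp only [hU, Set.mem_iUnion, Finset.mem_range] at hx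
      obtain ⟨i, _, hxi⟩ := hx
      exact Set.mem_iUnion.mpr ⟨i, hxi⟩
    have hsup : μ S = ⨆ k, μ (U k) := by
      rw [← hUS]
      exact hUmono.directed_le.measure_iUnion
    have hhalf : ε / 2 ≠ 0 := by
      simp only [ne_eq, ENNReal.div_eq_zero_iff]
      push_neg
      exact ⟨hεne, by simp⟩
    have hex : ∃ k, μ S ≤ μ (U k) + ε / 2 := by
      rcases eq_or_ne (μ S) 0 with h0 | h0
      · exact ⟨0, by simp [h0]⟩
      · have hlt2 : μ S - ε / 2 < ⨆ k, μ (U k) := by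
          rw [← hsup]
          exact ENNReal.sub_lt_self hSfin h0 hhalf
        obtain ⟨k, hk⟩ := lt_iSup_iff.mp hlt2
        exact ⟨k, tsub_le_iff_right.mp hk.le⟩
    obtain ⟨k, hk⟩ := hex
    have htail : μ (S \ U k) ≤ ε / 2 := by
      rw [measure_diff (hUsubS k) (hUmeas k).nullMeasurableSet
        (ne_top_of_le_ne_top hSfin (measure_mono (hUsubS k)))]
      exact tsub_le_iff_right.mpr (by rw [add_comm] at hk ⊢; rwa [add_comm])
    set δ := ε / 2 / ((k : ENNReal) + 1) with hδ
    have hδpos : 0 < δ := ENNReal.div_pos hhalf (by simp)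
    choose B hBdet hBsd using fun i : ℕ => hC i δ hδpos
    refine ⟨⋃ i ∈ Finset.range k, B i, biUnion_mem_det hm k B hBdet, ?_⟩
    have hsub : symmDiff S (⋃ i ∈ Finset.range k, B i)
        ⊆ (S \ U k) ∪ ⋃ i ∈ Finset.range k, symmDiff (f i) (B i) := by
      rw [Set.symmDiff_def]
      rintro x (⟨hxS, hxB⟩ | ⟨hxB, hxS⟩)
      · by_cases hxU : x ∈ U k
        · right
          have hx2 : ∃ j, j ∈ Finset.range k ∧ x ∈ f j := by
            simpa only [hU, Set.mem_iUnion, exists_prop] using hxU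
          obtain ⟨j, hjk, hxj⟩ := hx2
          refine Set.mem_biUnion hjk ?_
          rw [Set.symmDiff_def]
          left
          exact ⟨hxj, fun hB => hxB (Set.mem_biUnion hjk hB)⟩
        · left; exact ⟨hxS, hxU⟩
      · right
        have hx2 : ∃ j, j ∈ Finset.range k ∧ x ∈ B j := by
          simpa only [Set.mem_iUnion, exists_prop] using hxB
        obtain ⟨j, hjk, hxj⟩ := hx2
        refine Set.mem_biUnion hjk ?_
        rw [Set.symmDiff_def]
        right
        exact ⟨hxj, fun hf => hxS (Set.mem_iUnion.mpr ⟨j, hf⟩)⟩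
    have hc0 : ((k : ENNReal) + 1) ≠ 0 := by simp
    have hct : ((k : ENNReal) + 1) ≠ ⊤ := by simp
    calc μ (symmDiff S (⋃ i ∈ Finset.range k, B i))
        ≤ μ ((S \ U k) ∪ ⋃ i ∈ Finset.range k, symmDiff (f i) (B i)) := measure_mono hsub
      _ ≤ μ (S \ U k) + μ (⋃ i ∈ Finset.range k, symmDiff (f i) (B i)) := measure_union_le _ _
      _ ≤ ε / 2 + ∑ i ∈ Finset.range k, μ (symmDiff (f i) (B i)) :=
          add_le_add htail (measure_biUnion_finset_le _ _)
      _ ≤ ε / 2 + ∑ i ∈ Finset.range k, δ :=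
          add_le_add le_rfl (Finset.sum_le_sum fun i _ => hBsd i)
      _ ≤ ε / 2 + ε / 2 := by
          rw [Finset.sum_const, Finset.card_range, nsmul_eq_mul]
          refine add_le_add le_rfl ?_
          calc (k : ENNReal) * δ ≤ ((k : ENNReal) + 1) * δ := by
                apply mul_le_mul_left (by simp : (k:ENNReal) ≤ (k:ENNReal)+1)
            _ = ε / 2 := by
                rw [hδ, div_eq_mul_inv, ← mul_assoc, mul_comm ((k:ENNReal)+1) (ε/2),
                  mul_assoc, ENNReal.mul_inv_cancel hc0 hct, mul_one]
      _ = ε := ENNReal.add_halves ε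

section Ergodic
variable {l r : ℤ} {lam : ℤ → ZMod m}

lemma ergodic_of_no_zero (hm : 2 ≤ m) {μ : Measure (ℤ → ZMod m)}
    (hμ : IsUniformBernoulli m μ) (hbij : Function.Bijective (cellAuto m l r lam))
    (hinv' : ∀ (p : ℕ), p.Prime → ∀ (hpm : p ∣ m), ∃ j₀ : ℤ, j₀ ≠ 0 ∧
      (l ≤ j₀ ∧ j₀ ≤ r ∧ ¬ p ∣ (lam j₀).val) ∧
      (∀ j, l ≤ j → j ≤ r → ¬ p ∣ (lam j).val → j = j₀))
    {A : Set (ℤ → ZMod m)} (hA : MeasurableSet A)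
    (hinvA : cellAuto m l r lam ⁻¹' A = A) : μ A = 0 ∨ μ A = 1 := by
  classical
  haveI := hμ.1
  have hiter : ∀ n : ℕ, (cellAuto m l r lam)^[n] ⁻¹' A = A := by
    intro n
    induction n with
    | zero => rfl
    | succ n ih => rw [Function.iterate_succ', Set.preimage_comp, hinvA, ih]
  have hα1 : μ A ≤ 1 := prob_le_one
  have key : ∀ ε : ENNReal, 0 < ε → μ A ≤ μ A * μ A + ε ∧ μ A * μ A ≤ μ A + ε := by
    intro ε hε
    have hε50 : 0 < ε / 5 := ENNReal.div_pos hε.ne' (by simp)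
    obtain ⟨B, hBdet, hBsd⟩ := approx hm hμ hA (ε/5) hε50
    have hBmeas := detSets_measurable hBdet
    obtain ⟨N, hN⟩ := det_mixing hm hμ hinv' hBdet hBdet
    have hmix := hN N le_rfl
    set T := cellAuto m l r lam with hT
    set δ := μ (symmDiff A B) with hδ
    have hδ5 : δ ≤ ε / 5 := hBsd
    have hsd_meas : MeasurableSet (symmDiff A B) := hA.symmDiff hBmeas
    have hpre : μ (T^[N] ⁻¹' (symmDiff A B)) = δ := preserve hm hμ hbij N hsd_meas
    have hB1 : μ B ≤ 1 := prob_le_one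
    have hABμ : μ B ≤ μ A + δ := by
      have hs : B ⊆ A ∪ symmDiff A B := by
        intro x hx
        by_cases h : x ∈ A
        · exact Or.inl h
        · exact Or.inr (Set.mem_symmDiff.mpr (Or.inr ⟨hx, h⟩))
      exact (measure_mono hs).trans (measure_union_le _ _)
    have hBAμ : μ A ≤ μ B + δ := by
      have hs : A ⊆ B ∪ symmDiff A B := by
        intro x hx
        by_cases h : x ∈ B
        · exact Or.inl h
        · exact Or.inr (Set.mem_symmDiff.mpr (Or.inl ⟨hx, h⟩))
      exact (measure_mono hs).trans (measure_union_le _ _)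
    have hsub1 : A ⊆ (T^[N] ⁻¹' B ∩ B) ∪ (T^[N] ⁻¹' (symmDiff A B) ∪ symmDiff A B) := by
      intro x hx
      have hTx : T^[N] x ∈ A := by
        have : x ∈ T^[N] ⁻¹' A := by rw [hiter N]; exact hx
        exact this
      by_cases h1 : T^[N] x ∈ B
      · by_cases h2 : x ∈ B
        · exact Or.inl ⟨h1, h2⟩
        · exact Or.inr (Or.inr (Set.mem_symmDiff.mpr (Or.inl ⟨hx, h2⟩)))
      · exact Or.inr (Or.inl (Set.mem_preimage.mpr (Set.mem_symmDiff.mpr (Or.inl ⟨hTx, h1⟩))))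
    have hsub2 : T^[N] ⁻¹' B ∩ B ⊆ A ∪ (T^[N] ⁻¹' (symmDiff A B) ∪ symmDiff A B) := by
      rintro x ⟨h1, h2⟩
      by_cases hx : x ∈ A
      · exact Or.inl hx
      · exact Or.inr (Or.inr (Set.mem_symmDiff.mpr (Or.inr ⟨h2, hx⟩)))
    have hb1 : μ A ≤ μ B * μ B + (δ + δ) := by
      calc μ A ≤ μ (T^[N] ⁻¹' B ∩ B)
            + (μ (T^[N] ⁻¹' (symmDiff A B)) + μ (symmDiff A B)) :=
          le_trans (measure_mono hsub1)
            (le_trans (measure_union_le _ _) (add_le_add le_rfl (measure_union_le _ _)))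
        _ = μ B * μ B + (δ + δ) := by rw [hmix, hpre]
    have hb2 : μ B * μ B ≤ μ A + (δ + δ) := by
      calc μ B * μ B = μ (T^[N] ⁻¹' B ∩ B) := hmix.symm
        _ ≤ μ A + (μ (T^[N] ⁻¹' (symmDiff A B)) + μ (symmDiff A B)) :=
          le_trans (measure_mono hsub2)
            (le_trans (measure_union_le _ _) (add_le_add le_rfl (measure_union_le _ _)))
        _ = μ A + (δ + δ) := by rw [hpre]
    have hprod : ∀ u v : ENNReal, u ≤ 1 → v ≤ 1 →
        (u + δ) * (u + δ) ≤ u * u + (δ + δ + δ) := by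
      intro u v hu hv
      have e1 : (u + δ) * (u + δ) = u * u + (u * δ + δ * u + δ * δ) := by ring
      rw [e1]
      refine add_le_add le_rfl (add_le_add (add_le_add ?_ ?_) ?_)
      · calc u * δ ≤ 1 * δ := mul_le_mul_left hu δ
          _ = δ := one_mul δ
      · calc δ * u ≤ δ * 1 := mul_le_mul_right hu δ
          _ = δ := mul_one δ
      · calc δ * δ ≤ δ * 1 := mul_le_mul_right (hδ ▸ prob_le_one) δ
          _ = δ := mul_one δ
    have hBB1 : μ B * μ B ≤ μ A * μ A + (δ + δ + δ) := by
      calc μ B * μ B ≤ (μ A + δ) * (μ A + δ) := mul_le_mul' hABμ hABμ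
        _ ≤ μ A * μ A + (δ + δ + δ) := hprod (μ A) (μ A) hα1 hα1
    have hAA1 : μ A * μ A ≤ μ B * μ B + (δ + δ + δ) := by
      calc μ A * μ A ≤ (μ B + δ) * (μ B + δ) := mul_le_mul' hBAμ hBAμ
        _ ≤ μ B * μ B + (δ + δ + δ) := hprod (μ B) (μ B) hB1 hB1
    have h5δ : δ + δ + δ + (δ + δ) ≤ ε := by
      have h1 : δ + δ + δ + (δ + δ) = 5 * δ := by ring
      rw [h1]
      calc 5 * δ ≤ 5 * (ε / 5) := mul_le_mul_right hδ5 5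
        _ = ε := ENNReal.mul_div_cancel (by norm_num) (by norm_num)
    constructor
    · calc μ A ≤ μ B * μ B + (δ + δ) := hb1
        _ ≤ (μ A * μ A + (δ + δ + δ)) + (δ + δ) := add_le_add hBB1 le_rfl
        _ = μ A * μ A + (δ + δ + δ + (δ + δ)) := by ring
        _ ≤ μ A * μ A + ε := add_le_add le_rfl h5δ
    · calc μ A * μ A ≤ μ B * μ B + (δ + δ + δ) := hAA1
        _ ≤ (μ A + (δ + δ)) + (δ + δ + δ) := add_le_add hb2 le_rfl
        _ = μ A + (δ + δ + δ + (δ + δ)) := by ring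
        _ ≤ μ A + ε := add_le_add le_rfl h5δ
  have heq : μ A = μ A * μ A := by
    apply le_antisymm
    · apply ENNReal.le_of_forall_pos_le_add
      intro ν hν _
      exact (key ν (by exact_mod_cast hν)).1
    · apply ENNReal.le_of_forall_pos_le_add
      intro ν hν _
      exact (key ν (by exact_mod_cast hν)).2
  rcases eq_or_ne (μ A) 0 with h0 | h0
  · exact Or.inl h0
  · right
    by_contra h1
    have hlt : μ A < 1 := lt_of_le_of_ne hα1 h1
    have h2 : μ A * μ A < μ A * 1 :=
      ENNReal.mul_lt_mul_right h0 (measure_ne_top μ A) hlt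
    rw [mul_one, ← heq] at h2
    exact lt_irrefl _ h2

end Ergodic
end CA

set_option maxHeartbeats 2000000 in
/-- An invertible linear cellular automaton (for each prime factor `p` of `m` there is a
unique index `j_p` with `p ∤ λ_{j_p}`) fails to be ergodic with respect to the uniform
Bernoulli measure iff `j_p = 0` for some prime factor `p` of `m`. -/
theorem invertible_not_ergodic_iff
    (m : ℕ) (hm : 2 ≤ m) (l r : ℤ) (hlr : l ≤ r) (lam : ℤ → ZMod m)
    (μ : Measure (ℤ → ZMod m)) (hμ : IsUniformBernoulli m μ)
    (hbij : Function.Bijective (cellAuto m l r lam))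
    (hinv : ∀ p : ℕ, p.Prime → p ∣ m →
      ∃! j : ℤ, l ≤ j ∧ j ≤ r ∧ ¬ (p : ℕ) ∣ (lam j).val) :
    ¬ IsErgodic (cellAuto m l r lam) μ ↔
      ∃ p : ℕ, p.Prime ∧ p ∣ m ∧ (l ≤ 0 ∧ (0 : ℤ) ≤ r ∧ ¬ (p : ℕ) ∣ (lam 0).val) := by
  classical
  haveI : NeZero m := ⟨by omega⟩
  haveI := hμ.1
  constructor
  · intro hne
    by_contra hno
    refine hne (fun A hA hinvA => CA.ergodic_of_no_zero hm hμ hbij ?_ hA hinvA)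
    intro p hp hpm
    obtain ⟨j₀, hj₀, huniq⟩ := hinv p hp hpm
    refine ⟨j₀, ?_, hj₀, fun j h1 h2 h3 => huniq j ⟨h1, h2, h3⟩⟩
    intro h0
    rw [h0] at hj₀
    exact hno ⟨p, hp, hpm, hj₀⟩
  · rintro ⟨p, hp, hpm, hl0, hr0, hpl⟩ herg
    haveI : Fact p.Prime := ⟨hp⟩
    obtain ⟨j₀, hj₀, huniq⟩ := hinv p hp hpm
    have hj0 : (0:ℤ) = j₀ := huniq 0 ⟨hl0, hr0, hpl⟩
    have huniq' : ∀ j, l ≤ j → j ≤ r → ¬ p ∣ (lam j).val → j = (0:ℤ) := by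
      intro j h1 h2 h3
      rw [hj0]
      exact huniq j ⟨h1, h2, h3⟩
    have hj₀' : l ≤ (0:ℤ) ∧ (0:ℤ) ≤ r ∧ ¬ p ∣ (lam 0).val := ⟨hl0, hr0, hpl⟩
    set π := ZMod.castHom hpm (ZMod p) with hπ
    have hπl0 : π (lam 0) ≠ 0 := by
      rw [hπ, Ne, CA.cast_eq_zero_iff' hm hpm]
      exact hpl
    set A : Set (ℤ → ZMod m) := {x | π (x 0) = π (x 1)} with hAdef
    have hAmeas : MeasurableSet A := by
      have h1 : A = ⋃ a ∈ {a : ZMod m × ZMod m | π a.1 = π a.2},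
          ({x : ℤ → ZMod m | x 0 = a.1} ∩ {x | x 1 = a.2}) := by
        ext x
        simp only [Set.mem_iUnion, Set.mem_setOf_eq, Set.mem_inter_iff, hAdef]
        constructor
        · intro h
          exact ⟨(x 0, x 1), h, rfl, rfl⟩
        · rintro ⟨a, ha, h0', h1'⟩
          rw [h0', h1']
          exact ha
      rw [h1]
      refine MeasurableSet.biUnion (Set.to_countable _) fun a _ => ?_
      have hm0 : MeasurableSet ((fun x : ℤ → ZMod m => x 0) ⁻¹' {a.1}) :=
        (measurable_pi_apply 0) (measurableSet_singleton a.1)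
      have hm1 : MeasurableSet ((fun x : ℤ → ZMod m => x 1) ⁻¹' {a.2}) :=
        (measurable_pi_apply 1) (measurableSet_singleton a.2)
      exact hm0.inter hm1
    have hinvA : cellAuto m l r lam ⁻¹' A = A := by
      ext x
      simp only [Set.mem_preimage, hAdef, Set.mem_setOf_eq]
      have hc0 := CA.cast_cellAuto (l := l) (r := r) (lam := lam) hm hpm 0 hj₀' huniq' x 0
      have hc1 := CA.cast_cellAuto (l := l) (r := r) (lam := lam) hm hpm 0 hj₀' huniq' x 1
      rw [← hπ] at hc0 hc1
      rw [hc0, hc1, add_zero, add_zero]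
      constructor
      · intro h; exact mul_left_cancel₀ hπl0 h
      · intro h; rw [h]
    have hpos : (0:ENNReal) < (m:ENNReal)⁻¹ ^ 2 :=
      pos_iff_ne_zero.mpr (pow_ne_zero 2 (ENNReal.inv_ne_zero.mpr (by simp)))
    rcases herg A hAmeas hinvA with h0 | h1
    · have hsub : {x : ℤ → ZMod m | ∀ i ∈ ({0, 1} : Finset ℤ), x i = (fun _ => (0 : ZMod m)) i}
          ⊆ A := by
        intro x hx
        have e0 := hx 0 (by simp)
        have e1 := hx 1 (by simp)
        rw [hAdef]
        simp only [Set.mem_setOf_eq]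
        rw [e0, e1]
      have hμc := hμ.2 ({0,1} : Finset ℤ) (fun _ => 0)
      have hcard : ({0,1} : Finset ℤ).card = 2 := by decide
      rw [hcard] at hμc
      have hlt : (0:ENNReal) < μ A := lt_of_lt_of_le hpos (hμc ▸ measure_mono hsub)
      rw [h0] at hlt
      exact lt_irrefl _ hlt
    · have hCdisj : Disjoint A
          {x : ℤ → ZMod m | ∀ i ∈ ({0,1} : Finset ℤ), x i = (fun i => if i = 0 then 0 else 1) i} := by
        rw [Set.disjoint_left]
        intro x hxA hxC
        have e0 : x 0 = 0 := by simpa using hxC 0 (by simp)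
        have e1 : x 1 = 1 := by simpa using hxC 1 (by simp)
        rw [hAdef] at hxA
        simp only [Set.mem_setOf_eq] at hxA
        rw [e0, e1, map_zero, map_one] at hxA
        exact zero_ne_one hxA
      have hμC := hμ.2 ({0,1} : Finset ℤ) (fun i => if i = 0 then 0 else 1)
      have hcard : ({0,1} : Finset ℤ).card = 2 := by decide
      rw [hcard] at hμC
      have hunion : μ A + μ {x : ℤ → ZMod m | ∀ i ∈ ({0,1} : Finset ℤ),
            x i = if i = 0 then 0 else 1}
          = μ (A ∪ {x : ℤ → ZMod m | ∀ i ∈ ({0,1} : Finset ℤ), x i = if i = 0 then 0 else 1}) :=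
        (measure_union hCdisj (CA.measurableSet_cyl ({0,1} : Finset ℤ)
          (fun i => if i = 0 then 0 else 1))).symm
      have hle : μ (A ∪ {x : ℤ → ZMod m | ∀ i ∈ ({0,1} : Finset ℤ),
          x i = if i = 0 then 0 else 1}) ≤ 1 := prob_le_one
      rw [h1, hμC] at hunion
      have hcontra : (1:ENNReal) + (m:ENNReal)⁻¹ ^ 2 ≤ 1 := le_of_eq_of_le hunion hle
      have hgt : (1:ENNReal) < 1 + (m:ENNReal)⁻¹ ^ 2 :=
        ENNReal.lt_add_right ENNReal.one_ne_top hpos.ne'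
      exact lt_irrefl _ (lt_of_lt_of_le hgt hcontra)
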